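/- Let n ≥ 1 and let H_0, …, H_{2n−2} be p×p complex matrices with H_k = H_k* such that the block Hankel matrix H(n) = {H_{i+j−2}}_{i,j=1}^n is positive definite (hence H(r) = {H_{i+j−2}}_{i,j=1}^r > 0 for 1 ≤ r ≤ n). For 1 ≤ r ≤ n set T(r) := H(r)^{−1}, P₂(r) := [0 … 0 I_p] (the p×rp matrix selecting the last block), t_r := P₂(r)T(r)P₂(r)*, and Π(r) := [Φ₁(r) Φ₂(r)] with Φ₁(r) = −i·(0, H_0, …, H_{r−2})ᵀ and Φ₂(r) = (I_p, 0, …, 0)ᵀ (block columns of size rp×p). Define the Verblunsky-type coefficients ω_k := P₂(k+1)T(k+1)Π(k+1) (p×2p matrices, 0 ≤ k ≤ n−1). Then: (a) t_r is positive definite for 1 ≤ r ≤ n; (b) ω_0 = [0 t_1]; (c) ω_k J ω_k* = 0 for 0 ≤ k ≤ n−1; and (d) i·ω_k J ω_{k−1}* = t_{k+1} for 1 ≤ k ≤ n−1, where J = [[0, I_p],[I_p, 0]]. -/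

import Mathlib

open Matrix
open scoped ComplexOrder

noncomputable section

/-- The `rp × rp` block Hankel matrix `H(r) = {H_{i+j-2}}_{i,j=1}^r`. -/
def hankelMat (p : ℕ) (Hm : ℕ → Matrix (Fin p) (Fin p) ℂ) (r : ℕ) :
    Matrix (Fin r × Fin p) (Fin r × Fin p) ℂ :=
  Matrix.of fun x y => Hm ((x.1 : ℕ) + (y.1 : ℕ)) x.2 y.2

/-- The `p × rp` matrix `P₂(r) = [0 … 0 I_p]` selecting the last block. -/
def P2mat (p r : ℕ) : Matrix (Fin p) (Fin r × Fin p) ℂ :=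
  Matrix.of fun a y => if (y.1 : ℕ) = r - 1 ∧ a = y.2 then 1 else 0

/-- `t_r = P₂(r) H(r)⁻¹ P₂(r)^*`. -/
def tMat (p : ℕ) (Hm : ℕ → Matrix (Fin p) (Fin p) ℂ) (r : ℕ) :
    Matrix (Fin p) (Fin p) ℂ :=
  P2mat p r * (hankelMat p Hm r)⁻¹ * (P2mat p r)ᴴ

/-- `Π(r) = [Φ₁(r) Φ₂(r)]` with `Φ₁(r) = -i (0, H_0, …, H_{r-2})ᵀ`,
`Φ₂(r) = (I_p, 0, …, 0)ᵀ`. -/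
def PiMat (p : ℕ) (Hm : ℕ → Matrix (Fin p) (Fin p) ℂ) (r : ℕ) :
    Matrix (Fin r × Fin p) (Fin p ⊕ Fin p) ℂ :=
  Matrix.fromCols
    (Matrix.of fun x b =>
      -Complex.I * (if (x.1 : ℕ) = 0 then 0 else Hm ((x.1 : ℕ) - 1) x.2 b))
    (Matrix.of fun x b => if (x.1 : ℕ) = 0 ∧ x.2 = b then (1 : ℂ) else 0)

/-- The Verblunsky-type coefficient `ω_k = P₂(k+1) H(k+1)⁻¹ Π(k+1)`. -/
def omegaMat (p : ℕ) (Hm : ℕ → Matrix (Fin p) (Fin p) ℂ) (k : ℕ) :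
    Matrix (Fin p) (Fin p ⊕ Fin p) ℂ :=
  P2mat p (k + 1) * (hankelMat p Hm (k + 1))⁻¹ * PiMat p Hm (k + 1)

/-! ### Auxiliary lemmas -/

/-- Positive definiteness is preserved by injective submatrices. -/
lemma posdef_submatrix_inj {m n : Type*} [Fintype m] [Fintype n] [DecidableEq m] [DecidableEq n]
    {A : Matrix n n ℂ} (hA : A.PosDef) (f : m → n) (hf : Function.Injective f) :
    (A.submatrix f f).PosDef := by
  refine Matrix.PosDef.of_dotProduct_mulVec_pos ?_ ?_
  · have := hA.isHermitian
    unfold Matrix.IsHermitian at *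
    rw [conjTranspose_submatrix, this]
  · intro x hx
    classical
    set y : n → ℂ := fun i => ∑ j : m, if f j = i then x j else 0 with hy
    have hyf : ∀ j, y (f j) = x j := by
      intro j
      rw [hy]
      simp only
      rw [Finset.sum_eq_single j]
      · simp
      · intro b _ hb
        rw [if_neg (fun h => hb (hf h))]
      · simp
    have hyne : y ≠ 0 := by
      obtain ⟨j, hj⟩ := Function.ne_iff.mp hx
      intro h
      apply hj
      rw [← hyf j, h]
      rfl
    have hmv : ∀ i, (A *ᵥ y) i = ∑ j' : m, A i (f j') * x j' := by
      intro i
      rw [mulVec, dotProduct]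
      calc ∑ i' : n, A i i' * y i'
          = ∑ i' : n, ∑ j' : m, if f j' = i' then A i i' * x j' else 0 := by
            refine Finset.sum_congr rfl fun i' _ => ?_
            rw [hy]
            simp only
            rw [Finset.mul_sum]
            refine Finset.sum_congr rfl fun j' _ => ?_
            split <;> simp
        _ = ∑ j' : m, ∑ i' : n, if f j' = i' then A i i' * x j' else 0 := Finset.sum_comm
        _ = ∑ j' : m, A i (f j') * x j' := by
            refine Finset.sum_congr rfl fun j' _ => ?_
            rw [Finset.sum_ite_eq Finset.univ (f j') (fun i' => A i i' * x j')]
            simp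
    have key : star x ⬝ᵥ (A.submatrix f f) *ᵥ x = star y ⬝ᵥ A *ᵥ y := by
      rw [dotProduct, dotProduct]
      calc ∑ j, (star x) j * ((A.submatrix f f) *ᵥ x) j
          = ∑ j : m, star (x j) * (A *ᵥ y) (f j) := by
            refine Finset.sum_congr rfl fun j _ => ?_
            rw [hmv (f j), mulVec, dotProduct]
            rfl
        _ = ∑ j : m, ∑ i : n, if f j = i then star (x j) * (A *ᵥ y) i else 0 := by
            refine Finset.sum_congr rfl fun j _ => ?_
            rw [Finset.sum_ite_eq Finset.univ (f j) (fun i => star (x j) * (A *ᵥ y) i)]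
            simp
        _ = ∑ i : n, ∑ j : m, if f j = i then star (x j) * (A *ᵥ y) i else 0 := Finset.sum_comm
        _ = ∑ i, (star y) i * (A *ᵥ y) i := by
            refine Finset.sum_congr rfl fun i _ => ?_
            rw [Pi.star_apply, hy]
            simp only [star_sum]
            rw [Finset.sum_mul]
            refine Finset.sum_congr rfl fun j _ => ?_
            split <;> simp
    rw [key]
    exact hA.dotProduct_mulVec_pos hyne

/-- the solution blocks `y_j` of `H(r) y = P₂(r)ᴴ` -/
def yB (p : ℕ) (Hm : ℕ → Matrix (Fin p) (Fin p) ℂ) (r : ℕ) (j : Fin r) :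
    Matrix (Fin p) (Fin p) ℂ :=
  Matrix.of fun c b => ((hankelMat p Hm r)⁻¹ * (P2mat p r)ᴴ) (j, c) b

variable {p : ℕ} {Hm : ℕ → Matrix (Fin p) (Fin p) ℂ}

lemma P2_mul_inv {r : ℕ} (hpd : (hankelMat p Hm r).PosDef) :
    P2mat p r * (hankelMat p Hm r)⁻¹ = ((hankelMat p Hm r)⁻¹ * (P2mat p r)ᴴ)ᴴ := by
  rw [conjTranspose_mul, conjTranspose_conjTranspose, hpd.inv.isHermitian.eq]

lemma mul_P2H_apply {r : ℕ} (hr : 0 < r) {α : Type*} [Fintype α]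
    (M : Matrix α (Fin r × Fin p) ℂ) (c : α) (a : Fin p) :
    (M * (P2mat p r)ᴴ) c a = M c (⟨r - 1, by omega⟩, a) := by
  rw [mul_apply]
  rw [Finset.sum_eq_single ((⟨r - 1, by omega⟩, a) : Fin r × Fin p)]
  · simp [P2mat]
  · intro b _ hb
    have : ¬((b.1 : ℕ) = r - 1 ∧ a = b.2) := by
      rintro ⟨h1, h2⟩
      exact hb (Prod.ext (Fin.ext h1) h2.symm)
    simp [P2mat, conjTranspose_apply, this]
  · simp

lemma P2H_entry {r : ℕ} (j : Fin r) (a b : Fin p) :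
    (P2mat p r)ᴴ (j, a) b =
      (if (j : ℕ) = r - 1 then (1 : Matrix (Fin p) (Fin p) ℂ) else 0) a b := by
  simp only [conjTranspose_apply, P2mat, of_apply]
  rcases eq_or_ne (j : ℕ) (r - 1) with hjr | hjr
  · rcases eq_or_ne b a with hab | hab
    · subst hab
      simp [hjr, Matrix.one_apply]
    · simp [hjr, hab, Matrix.one_apply, (Ne.symm hab : a ≠ b)]
  · simp [hjr]

/-- relation R1 : `∑ l, H_{j+l} y_l = δ_{j,r-1}` -/
lemma yB_rel1 {r : ℕ} (hpd : (hankelMat p Hm r).PosDef) (j : ℕ) (hj : j < r) :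
    ∑ l : Fin r, Hm (j + (l : ℕ)) * yB p Hm r l = if j = r - 1 then 1 else 0 := by
  have h : hankelMat p Hm r * ((hankelMat p Hm r)⁻¹ * (P2mat p r)ᴴ) = (P2mat p r)ᴴ := by
    rw [← Matrix.mul_assoc, mul_nonsing_inv _ ((isUnit_iff_isUnit_det _).mp hpd.isUnit),
      Matrix.one_mul]
  ext a b
  have h2 := congrFun (congrFun h ((⟨j, hj⟩ : Fin r), a)) b
  rw [mul_apply, Fintype.sum_prod_type] at h2
  rw [Matrix.sum_apply]
  calc ∑ l : Fin r, (Hm (j + (l : ℕ)) * yB p Hm r l) a b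
      = ∑ l : Fin r, ∑ c : Fin p, hankelMat p Hm r (⟨j, hj⟩, a) (l, c) *
          ((hankelMat p Hm r)⁻¹ * (P2mat p r)ᴴ) (l, c) b := by
        refine Finset.sum_congr rfl fun l _ => ?_
        rw [mul_apply]
        rfl
    _ = (P2mat p r)ᴴ ((⟨j, hj⟩ : Fin r), a) b := h2
    _ = (if j = r - 1 then (1 : Matrix (Fin p) (Fin p) ℂ) else 0) a b := P2H_entry _ a b

/-- relation R2 : `∑ j, y_jᴴ H_{j+l} = δ_{l,r-1}` -/
lemma yB_rel2 {r : ℕ} (hpd : (hankelMat p Hm r).PosDef)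
    (hh : ∀ k ≤ 2 * r - 2, (Hm k)ᴴ = Hm k) (l : ℕ) (hl : l < r) :
    ∑ j : Fin r, (yB p Hm r j)ᴴ * Hm ((j : ℕ) + l) = if l = r - 1 then 1 else 0 := by
  have h := congrArg conjTranspose (yB_rel1 hpd l hl)
  rw [conjTranspose_sum] at h
  calc ∑ j : Fin r, (yB p Hm r j)ᴴ * Hm ((j : ℕ) + l)
      = ∑ j : Fin r, (Hm (l + (j : ℕ)) * yB p Hm r j)ᴴ := by
        refine Finset.sum_congr rfl fun j _ => ?_
        rw [conjTranspose_mul, hh (l + (j : ℕ)) (by have := j.2; omega), Nat.add_comm l (j : ℕ)]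
    _ = (if l = r - 1 then (1 : Matrix (Fin p) (Fin p) ℂ) else 0)ᴴ := h
    _ = if l = r - 1 then 1 else 0 := by split <;> simp

lemma tMat_eq {r : ℕ} (hr : 0 < r) (hpd : (hankelMat p Hm r).PosDef) :
    tMat p Hm r = (yB p Hm r ⟨r - 1, by omega⟩)ᴴ := by
  have h : tMat p Hm r = ((hankelMat p Hm r)⁻¹ * (P2mat p r)ᴴ)ᴴ * (P2mat p r)ᴴ := by
    rw [tMat, P2_mul_inv hpd]
  rw [h]
  ext a b
  rw [mul_P2H_apply hr, conjTranspose_apply, conjTranspose_apply]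
  rfl

lemma tMat_posdef {r : ℕ} (hr : 0 < r) (hpd : (hankelMat p Hm r).PosDef) :
    (tMat p Hm r).PosDef := by
  refine Matrix.PosDef.of_dotProduct_mulVec_pos ?_ ?_
  · show (tMat p Hm r)ᴴ = tMat p Hm r
    rw [tMat, conjTranspose_mul, conjTranspose_mul, conjTranspose_conjTranspose,
      hpd.inv.isHermitian.eq, Matrix.mul_assoc]
  · intro x hx
    set w : (Fin r × Fin p) → ℂ := (P2mat p r)ᴴ *ᵥ x with hw
    have hwx : ∀ a, w (⟨r - 1, by omega⟩, a) = x a := by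
      intro a
      rw [hw]
      show ∑ b, (P2mat p r)ᴴ (⟨r - 1, by omega⟩, a) b * x b = x a
      rw [Finset.sum_eq_single a]
      · simp [P2mat, conjTranspose_apply]
      · intro b _ hb
        simp only [P2mat, conjTranspose_apply, of_apply]
        rw [if_neg (fun h => hb h.2)]
        simp
      · simp
    have hwne : w ≠ 0 := by
      obtain ⟨a, ha⟩ := Function.ne_iff.mp hx
      intro h
      apply ha
      rw [← hwx a, h]
      rfl
    have hquad : star x ⬝ᵥ tMat p Hm r *ᵥ x = star w ⬝ᵥ (hankelMat p Hm r)⁻¹ *ᵥ w := by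
      rw [tMat, ← mulVec_mulVec, ← mulVec_mulVec, dotProduct_mulVec]
      congr 1
      rw [hw, star_mulVec, conjTranspose_conjTranspose]
    rw [hquad]
    exact hpd.inv.dotProduct_mulVec_pos hwne

lemma omega_eq (k : ℕ) (hpd : (hankelMat p Hm (k + 1)).PosDef) :
    omegaMat p Hm k = Matrix.fromCols
      ((-Complex.I) • ∑ j : Fin k, (yB p Hm (k + 1) j.succ)ᴴ * Hm (j : ℕ))
      ((yB p Hm (k + 1) 0)ᴴ) := by
  have h1 : ((hankelMat p Hm (k + 1))⁻¹ * (P2mat p (k + 1))ᴴ)ᴴ *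
      (Matrix.of fun (x : Fin (k + 1) × Fin p) b =>
        -Complex.I * (if (x.1 : ℕ) = 0 then 0 else Hm ((x.1 : ℕ) - 1) x.2 b)) =
      (-Complex.I) • ∑ j : Fin k, (yB p Hm (k + 1) j.succ)ᴴ * Hm (j : ℕ) := by
    ext a b
    conv_rhs => rw [Matrix.smul_apply, Matrix.sum_apply]
    rw [smul_eq_mul, Finset.mul_sum, mul_apply, Fintype.sum_prod_type, Fin.sum_univ_succ]
    simp only [conjTranspose_apply, of_apply, Fin.val_zero, reduceIte, mul_zero,
      Finset.sum_const_zero, zero_add]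
    refine Finset.sum_congr rfl fun j _ => ?_
    conv_rhs => rw [Matrix.mul_apply]
    rw [Finset.mul_sum]
    refine Finset.sum_congr rfl fun c _ => ?_
    simp only [conjTranspose_apply, yB, of_apply, Fin.val_succ, Nat.add_sub_cancel]
    have : ¬((j : ℕ) + 1 = 0) := Nat.succ_ne_zero _
    rw [if_neg this]
    ring
  have h2 : ((hankelMat p Hm (k + 1))⁻¹ * (P2mat p (k + 1))ᴴ)ᴴ *
      (Matrix.of fun (x : Fin (k + 1) × Fin p) b =>
        if (x.1 : ℕ) = 0 ∧ x.2 = b then (1 : ℂ) else 0) = (yB p Hm (k + 1) 0)ᴴ := by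
    ext a b
    rw [mul_apply]
    rw [Finset.sum_eq_single (((0 : Fin (k + 1)), b) : Fin (k + 1) × Fin p)]
    · simp only [conjTranspose_apply, of_apply, Fin.val_zero]
      rw [if_pos ⟨trivial, trivial⟩, mul_one]
      rfl
    · intro z _ hz
      have : ¬((z.1 : ℕ) = 0 ∧ z.2 = b) := by
        rintro ⟨h1, h2⟩
        exact hz (Prod.ext (Fin.ext h1) h2)
      simp only [of_apply]
      rw [if_neg this, mul_zero]
    · simp
  rw [omegaMat, P2_mul_inv hpd, PiMat, mul_fromCols, h1, h2]

lemma core_c_abstract {p k : ℕ} (Hm : ℕ → Matrix (Fin p) (Fin p) ℂ)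
    (y : Fin (k + 1) → Matrix (Fin p) (Fin p) ℂ)
    (hh : ∀ j, j ≤ 2 * k → (Hm j)ᴴ = Hm j)
    (rel1 : ∀ j : ℕ, j < k + 1 →
      ∑ l : Fin (k + 1), Hm (j + (l : ℕ)) * y l = if j = k then 1 else 0)
    (rel2 : ∀ l : ℕ, l < k + 1 →
      ∑ j : Fin (k + 1), (y j)ᴴ * Hm ((j : ℕ) + l) = if l = k then 1 else 0) :
    (∑ j : Fin k, (y j.succ)ᴴ * Hm (j : ℕ)) * y 0 =
      ((∑ j : Fin k, (y j.succ)ᴴ * Hm (j : ℕ)) * y 0)ᴴ := by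
  set S := ∑ j : Fin k, (y j.succ)ᴴ * Hm (j : ℕ) with hS
  have hSH : Sᴴ = ∑ j : Fin k, Hm (j : ℕ) * y j.succ := by
    rw [hS, conjTranspose_sum]
    refine Finset.sum_congr rfl fun j _ => ?_
    rw [conjTranspose_mul, conjTranspose_conjTranspose, hh j (by have := j.2; omega)]
  have key : (0 : Matrix (Fin p) (Fin p) ℂ) = (y 0)ᴴ * Sᴴ - S * y 0 := by
    calc (0 : Matrix (Fin p) (Fin p) ℂ)
        = ∑ l : Fin k, (if ((l : ℕ)) = k then (1 : Matrix (Fin p) (Fin p) ℂ) else 0)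
            * y l.succ := by
          refine (Finset.sum_eq_zero fun l _ => ?_).symm
          rw [if_neg (by have := l.2; omega), zero_mul]
      _ = ∑ l : Fin k, (∑ j : Fin (k + 1), (y j)ᴴ * Hm ((j : ℕ) + (l : ℕ))) * y l.succ := by
          refine Finset.sum_congr rfl fun l _ => ?_
          rw [rel2 (l : ℕ) (by have := l.2; omega)]
      _ = ∑ j : Fin (k + 1), ∑ l : Fin k, (y j)ᴴ * Hm ((j : ℕ) + (l : ℕ)) * y l.succ := by
          rw [Finset.sum_comm]
          exact Finset.sum_congr rfl fun l _ => Finset.sum_mul _ _ _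
      _ = (y 0)ᴴ * Sᴴ +
            ∑ j : Fin k, (y j.succ)ᴴ * ∑ l : Fin k, Hm ((j : ℕ) + ((l : ℕ) + 1)) * y l.succ := by
          rw [Fin.sum_univ_succ]
          congr 1
          · rw [hSH, Finset.mul_sum]
            refine Finset.sum_congr rfl fun l _ => ?_
            rw [Matrix.mul_assoc, Fin.val_zero, Nat.zero_add]
          · refine Finset.sum_congr rfl fun j _ => ?_
            rw [Finset.mul_sum]
            refine Finset.sum_congr rfl fun l _ => ?_
            rw [Matrix.mul_assoc]
            have hidx : ((j.succ : Fin (k + 1)) : ℕ) + (l : ℕ) = (j : ℕ) + ((l : ℕ) + 1) := by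
              rw [Fin.val_succ]
              omega
            rw [hidx]
      _ = (y 0)ᴴ * Sᴴ + ∑ j : Fin k, (y j.succ)ᴴ * (- (Hm (j : ℕ) * y 0)) := by
          congr 1
          refine Finset.sum_congr rfl fun j _ => ?_
          congr 1
          have hfull := rel1 (j : ℕ) (by have := j.2; omega)
          rw [Fin.sum_univ_succ, if_neg (by have := j.2; omega)] at hfull
          simp only [Fin.val_zero, Nat.add_zero, Fin.val_succ] at hfull
          exact eq_neg_of_add_eq_zero_right hfull
      _ = (y 0)ᴴ * Sᴴ - S * y 0 := by
          rw [sub_eq_add_neg]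
          congr 1
          rw [hS, Finset.sum_mul]
          rw [← Finset.sum_neg_distrib]
          refine Finset.sum_congr rfl fun j _ => ?_
          rw [mul_neg, Matrix.mul_assoc]
  rw [conjTranspose_mul]
  exact (sub_eq_zero.mp key.symm).symm

lemma core_d_abstract {p m : ℕ} (Hm : ℕ → Matrix (Fin p) (Fin p) ℂ)
    (y : Fin (m + 2) → Matrix (Fin p) (Fin p) ℂ)
    (z : Fin (m + 1) → Matrix (Fin p) (Fin p) ℂ)
    (rel1z : ∀ j : ℕ, j < m + 1 →
      ∑ l : Fin (m + 1), Hm (j + (l : ℕ)) * z l = if j = m then 1 else 0)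
    (rel2y : ∀ l : ℕ, l < m + 2 →
      ∑ j : Fin (m + 2), (y j)ᴴ * Hm ((j : ℕ) + l) = if l = m + 1 then 1 else 0) :
    (∑ j : Fin (m + 1), (y j.succ)ᴴ * Hm (j : ℕ)) * z 0
      - (y 0)ᴴ * (∑ j : Fin m, Hm (j : ℕ) * z j.succ)
    = (y ⟨m + 1, by omega⟩)ᴴ := by
  have key : (y (⟨m + 1, by omega⟩ : Fin (m + 2)))ᴴ =
      (∑ j : Fin (m + 1), (y j.succ)ᴴ * Hm (j : ℕ)) * z 0
        - (y 0)ᴴ * (∑ j : Fin m, Hm (j : ℕ) * z j.succ) := by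
    calc (y (⟨m + 1, by omega⟩ : Fin (m + 2)))ᴴ
        = ∑ j : Fin (m + 1), (y j.succ)ᴴ *
            (if (j : ℕ) = m then (1 : Matrix (Fin p) (Fin p) ℂ) else 0) := by
          rw [Finset.sum_eq_single (⟨m, by omega⟩ : Fin (m + 1))]
          · rw [if_pos rfl, mul_one]
            congr 1
          · intro j _ hj
            rw [if_neg (fun h => hj (Fin.ext h)), mul_zero]
          · simp
      _ = ∑ j : Fin (m + 1), (y j.succ)ᴴ *
            (∑ l : Fin (m + 1), Hm ((j : ℕ) + (l : ℕ)) * z l) := by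
          refine Finset.sum_congr rfl fun j _ => ?_
          rw [rel1z (j : ℕ) (by have := j.2; omega)]
      _ = ∑ l : Fin (m + 1), ∑ j : Fin (m + 1),
            (y j.succ)ᴴ * Hm ((j : ℕ) + (l : ℕ)) * z l := by
          rw [Finset.sum_comm]
          refine Finset.sum_congr rfl fun j _ => ?_
          rw [Finset.mul_sum]
          refine Finset.sum_congr rfl fun l _ => ?_
          rw [Matrix.mul_assoc]
      _ = (∑ j : Fin (m + 1), (y j.succ)ᴴ * Hm (j : ℕ)) * z 0
            + ∑ l : Fin m,
                (∑ j : Fin (m + 1), (y j.succ)ᴴ * Hm ((j : ℕ) + ((l : ℕ) + 1))) * z l.succ := by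
          rw [Fin.sum_univ_succ]
          congr 1
          · rw [Finset.sum_mul]
            refine Finset.sum_congr rfl fun j _ => ?_
            norm_num
          · refine Finset.sum_congr rfl fun l _ => ?_
            rw [Finset.sum_mul]
            refine Finset.sum_congr rfl fun j _ => ?_
            rw [Fin.val_succ]
      _ = (∑ j : Fin (m + 1), (y j.succ)ᴴ * Hm (j : ℕ)) * z 0
            + ∑ l : Fin m, (- ((y 0)ᴴ * Hm (l : ℕ))) * z l.succ := by
          congr 1
          refine Finset.sum_congr rfl fun l _ => ?_
          congr 1
          have hfull := rel2y (l : ℕ) (by have := l.2; omega)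
          rw [Fin.sum_univ_succ, if_neg (by have := l.2; omega)] at hfull
          simp only [Fin.val_zero, Nat.zero_add, Fin.val_succ] at hfull
          have hre : ∑ j : Fin (m + 1), (y j.succ)ᴴ * Hm ((j : ℕ) + ((l : ℕ) + 1)) =
              ∑ j : Fin (m + 1), (y j.succ)ᴴ * Hm ((j : ℕ) + 1 + (l : ℕ)) := by
            refine Finset.sum_congr rfl fun j _ => ?_
            have harg : ((j : ℕ) + ((l : ℕ) + 1)) = (j : ℕ) + 1 + (l : ℕ) := by omega
            rw [harg]
          rw [hre]
          exact eq_neg_of_add_eq_zero_right hfull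
      _ = (∑ j : Fin (m + 1), (y j.succ)ᴴ * Hm (j : ℕ)) * z 0
            - (y 0)ᴴ * (∑ j : Fin m, Hm (j : ℕ) * z j.succ) := by
          rw [sub_eq_add_neg]
          congr 1
          rw [Finset.mul_sum, ← Finset.sum_neg_distrib]
          refine Finset.sum_congr rfl fun l _ => ?_
          rw [neg_mul, Matrix.mul_assoc]
  exact key.symm

lemma conjT_shift_sum {p k : ℕ} (Hm : ℕ → Matrix (Fin p) (Fin p) ℂ)
    (z : Fin k → Matrix (Fin p) (Fin p) ℂ)
    (hh : ∀ j, j < k → (Hm j)ᴴ = Hm j) :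
    (∑ j : Fin k, (z j)ᴴ * Hm (j : ℕ))ᴴ = ∑ j : Fin k, Hm (j : ℕ) * z j := by
  rw [conjTranspose_sum]
  refine Finset.sum_congr rfl fun j _ => ?_
  rw [conjTranspose_mul, conjTranspose_conjTranspose, hh (j : ℕ) j.2]

lemma fromColumns_J_conj {p : ℕ} (A B C D : Matrix (Fin p) (Fin p) ℂ) :
    Matrix.fromCols A B *
      (Matrix.fromBlocks 0 1 1 0 : Matrix (Fin p ⊕ Fin p) (Fin p ⊕ Fin p) ℂ) *
      (Matrix.fromCols C D)ᴴ = A * Dᴴ + B * Cᴴ := by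
  rw [fromCols_mul_fromBlocks, conjTranspose_fromCols_eq_fromRows_conjTranspose,
    fromCols_mul_fromRows, Matrix.mul_zero, Matrix.mul_zero, Matrix.mul_one,
    Matrix.mul_one, zero_add, add_zero]
  exact add_comm _ _

/-- the properties of the Verblunsky-type coefficients of a positive
definite block Hankel matrix. -/
theorem hankel_verblunsky_coefficients
    {p n : ℕ} (hp : 1 ≤ p) (hn : 1 ≤ n)
    (Hm : ℕ → Matrix (Fin p) (Fin p) ℂ)
    (hHm : ∀ k ≤ 2 * n - 2, (Hm k)ᴴ = Hm k)
    (hpos : (hankelMat p Hm n).PosDef) :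
    (∀ r, 1 ≤ r → r ≤ n → (tMat p Hm r).PosDef) ∧
    (omegaMat p Hm 0 = Matrix.fromCols 0 (tMat p Hm 1)) ∧
    (∀ k ≤ n - 1,
      omegaMat p Hm k * (Matrix.fromBlocks 0 1 1 0 : Matrix (Fin p ⊕ Fin p) (Fin p ⊕ Fin p) ℂ) * (omegaMat p Hm k)ᴴ = 0) ∧
    (∀ k, 1 ≤ k → k ≤ n - 1 →
      Complex.I • (omegaMat p Hm k * (Matrix.fromBlocks 0 1 1 0 : Matrix (Fin p ⊕ Fin p) (Fin p ⊕ Fin p) ℂ) *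
        (omegaMat p Hm (k - 1))ᴴ) = tMat p Hm (k + 1)) := by
  have hpdr : ∀ r : ℕ, 1 ≤ r → r ≤ n → (hankelMat p Hm r).PosDef := by
    intro r h1 h2
    have hsub : hankelMat p Hm r =
        (hankelMat p Hm n).submatrix (fun x => (Fin.castLE h2 x.1, x.2))
          (fun x => (Fin.castLE h2 x.1, x.2)) := by
      ext x y
      rfl
    rw [hsub]
    refine posdef_submatrix_inj hpos _ ?_
    intro a b hab
    have h1' := congrArg Prod.fst hab
    have h2' := congrArg Prod.snd hab
    simp only at h1' h2'
    exact Prod.ext (Fin.castLE_injective h2 h1') h2'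
  refine ⟨?_, ?_, ?_, ?_⟩
  · -- (a)
    intro r h1 h2
    exact tMat_posdef (by omega) (hpdr r h1 h2)
  · -- (b)
    have hpd1 := hpdr 1 le_rfl hn
    rw [omega_eq 0 hpd1, tMat_eq (by omega) hpd1]
    congr 1
    · simp
  · -- (c)
    intro k hk
    have hk1 : k + 1 ≤ n := by omega
    have hpdk := hpdr (k + 1) (by omega) hk1
    have hhk : ∀ j, j ≤ 2 * k → (Hm j)ᴴ = Hm j := fun j hj => hHm j (by omega)
    have hhk' : ∀ j ≤ 2 * (k + 1) - 2, (Hm j)ᴴ = Hm j := fun j hj => hHm j (by omega)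
    rw [omega_eq k hpdk, fromColumns_J_conj]
    set S := ∑ j : Fin k, (yB p Hm (k + 1) j.succ)ᴴ * Hm (j : ℕ) with hSdef
    have hcore : S * yB p Hm (k + 1) 0 = (S * yB p Hm (k + 1) 0)ᴴ :=
      core_c_abstract Hm (yB p Hm (k + 1)) hhk
        (fun j hj => yB_rel1 hpdk j hj)
        (fun l hl => yB_rel2 hpdk hhk' l hl)
    rw [conjTranspose_conjTranspose, smul_mul_assoc, conjTranspose_smul,
      mul_smul_comm, ← conjTranspose_mul]
    rw [← hcore]
    have hstar : star (-Complex.I) = Complex.I := by simp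
    rw [hstar]
    rw [← add_smul]
    simp
  · -- (d)
    intro k h1 h2
    obtain ⟨m, rfl⟩ : ∃ m, k = m + 1 := ⟨k - 1, by omega⟩
    have hm2 : m + 2 ≤ n := by omega
    have hpd1 := hpdr (m + 2) (by omega) hm2
    have hpd0 := hpdr (m + 1) (by omega) (by omega)
    have hh2 : ∀ j ≤ 2 * (m + 2) - 2, (Hm j)ᴴ = Hm j := fun j hj => hHm j (by omega)
    have heq : m + 1 - 1 = m := rfl
    have heq2 : m + 1 + 1 = m + 2 := rfl
    rw [heq, heq2]
    rw [omega_eq (m + 1) (by rw [heq2]; exact hpd1), omega_eq m hpd0, fromColumns_J_conj]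
    set S1 := ∑ j : Fin (m + 1), (yB p Hm (m + 1 + 1) j.succ)ᴴ * Hm (j : ℕ) with hS1
    set S0 := ∑ j : Fin m, (yB p Hm (m + 1) j.succ)ᴴ * Hm (j : ℕ) with hS0
    rw [conjTranspose_conjTranspose, smul_mul_assoc, conjTranspose_smul,
      mul_smul_comm]
    have hstar : star (-Complex.I) = Complex.I := by simp
    rw [hstar, smul_add, smul_smul, smul_smul]
    have hI1 : Complex.I * -Complex.I = 1 := by
      rw [mul_neg, Complex.I_mul_I, neg_neg]
    have hI2 : Complex.I * Complex.I = -1 := Complex.I_mul_I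
    rw [hI1, hI2, one_smul, neg_one_smul, ← sub_eq_add_neg]
    have hS0H : S0ᴴ = ∑ j : Fin m, Hm (j : ℕ) * yB p Hm (m + 1) j.succ :=
      conjT_shift_sum Hm (fun j => yB p Hm (m + 1) j.succ) (fun j hj => hHm j (by omega))
    rw [hS0H]
    have hcd := core_d_abstract Hm (yB p Hm (m + 2)) (yB p Hm (m + 1))
      (fun j hj => yB_rel1 hpd0 j hj) (fun l hl => yB_rel2 hpd1 hh2 l hl)
    have ht : tMat p Hm (m + 2) = (yB p Hm (m + 2) ⟨m + 1, by omega⟩)ᴴ :=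
      tMat_eq (by omega) hpd1
    rw [ht]
    exact hcd
end
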